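/- (Chain rule.) Let X = (I,P), Y = (J,Q), Z = (K,R) be probabilistic coherence spaces, let s : Mfin(I)×J → [0,∞) be such that Fun s(x) = (Σ_μ s_{μ,b} x^μ)_b ∈ Q for all x ∈ P, and let t : Mfin(J)×K → [0,∞) be such that Fun t(y) = (Σ_ν t_{ν,c} y^ν)_c ∈ R for all y ∈ Q. Let x ∈ P and u ∈ [0,∞)^I with x + u ∈ P. Then for every c ∈ K, the function θ ↦ Fun t(Fun s(x+θu))_c has a right derivative at θ = 0 equal to Σ_{b∈J} Dt(Fun s(x))_{b,c} · (Σ_{a∈I} Ds(x)_{a,b} u_a), i.e. the derivative of the composite at x applied to u equals Dt(Fun s(x)) applied to Ds(x)·u. -/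

import Mathlib

open scoped ENNReal NNReal

noncomputable section

/-- ⟨u,u'⟩ = Σ_i u_i u'_i in [0,∞]. -/
def dotE {I : Type*} (u v : I → ℝ≥0∞) : ℝ≥0∞ := ∑' i, u i * v i

/-- The orthogonal P⊥ of a set P ⊆ [0,∞]^I. -/
def orthE {I : Type*} (P : Set (I → ℝ≥0∞)) : Set (I → ℝ≥0∞) :=
  {v | ∀ u ∈ P, dotE u v ≤ 1}

/-- (I,P) is a probabilistic coherence space. -/
structure IsPCS {I : Type*} (P : Set (I → ℝ≥0∞)) : Prop where
  biorth : orthE (orthE P) = P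
  nonzero : ∀ a, ∃ x ∈ P, 0 < x a
  bounded : ∀ a, ∃ m : ℝ≥0, ∀ x ∈ P, x a ≤ (m : ℝ≥0∞)

/-- x^μ = Π_{a∈I} x_a^{μ(a)}. -/
def mpow {I : Type*} (x : I → ℝ≥0∞) (μ : Multiset I) : ℝ≥0∞ := (μ.map x).prod

/-- Fun t(x)_b = Σ_μ t_{μ,b} x^μ. -/
def funApp {I J : Type*} (t : Multiset I → J → ℝ≥0∞) (x : I → ℝ≥0∞) : J → ℝ≥0∞ :=
  fun b => ∑' μ : Multiset I, t μ b * mpow x μ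

/-- The derivative matrix Dt(x)_{a,b} = Σ_μ (μ(a)+1) t_{μ+[a],b} x^μ. -/
def matDeriv {I J : Type*} [DecidableEq I] (t : Multiset I → J → ℝ≥0∞)
    (x : I → ℝ≥0∞) : I → J → ℝ≥0∞ :=
  fun a b => ∑' μ : Multiset I, ((μ.count a : ℝ≥0∞) + 1) * t (μ + {a}) b * mpow x μ

namespace Stmt13Aux

open Function

/-- `g` is a power series (ℕ-indexed list of monomials) with linear coefficient `L`. -/
def PS (g : ℝ≥0∞ → ℝ≥0∞) (L : ℝ≥0∞) : Prop :=
  ∃ (c : ℕ → ℝ≥0∞) (n : ℕ → ℕ),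
    (∀ q, g q = ∑' i, c i * q ^ n i) ∧ (∑' i, if n i = 1 then c i else 0) = L

lemma PS.ofRep {A : Type*} [Countable A] {g : ℝ≥0∞ → ℝ≥0∞} {L : ℝ≥0∞}
    (c : A → ℝ≥0∞) (n : A → ℕ)
    (hrep : ∀ q, g q = ∑' a, c a * q ^ n a)
    (hlin : (∑' a, if n a = 1 then c a else 0) = L) : PS g L := by
  classical
  obtain ⟨f, hf⟩ := Countable.exists_injective_nat A
  set e : ℕ → ℝ≥0∞ × ℕ := Function.extend f (fun a => (c a, n a)) (fun _ => (0, 0)) with he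
  have h1 : ∀ a, e (f a) = (c a, n a) := fun a => hf.extend_apply _ _ a
  have h2 : ∀ i, i ∉ Set.range f → e i = (0, 0) := by
    intro i hi
    exact Function.extend_apply' _ _ _ (by simpa [Set.range] using hi)
  refine ⟨fun i => (e i).1, fun i => (e i).2, fun q => ?_, ?_⟩
  · rw [hrep q]
    have := Function.Injective.tsum_eq (f := fun i => (e i).1 * q ^ (e i).2) hf ?_
    · rw [← this]
      exact tsum_congr fun a => by rw [h1 a]
    · intro i hi
      by_contra hr
      apply hi
      simp only [Function.mem_support, ne_eq, not_not] at *
      rw [h2 i hr]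
      simp
  · rw [← hlin]
    have := Function.Injective.tsum_eq (f := fun i => if (e i).2 = 1 then (e i).1 else 0) hf ?_
    · rw [← this]
      exact tsum_congr fun a => by rw [h1 a]
    · intro i hi
      by_contra hr
      apply hi
      simp only [Function.mem_support, ne_eq, not_not] at *
      rw [h2 i hr]
      simp

lemma tsum_unit (f : Unit → ℝ≥0∞) : ∑' p, f p = f () :=
  tsum_eq_single _ (fun b hb => absurd (Subsingleton.elim b _) hb)

lemma PS.congr {g g' : ℝ≥0∞ → ℝ≥0∞} {L L' : ℝ≥0∞} (h : PS g L)
    (h1 : ∀ q, g' q = g q) (h2 : L' = L) : PS g' L' := by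
  obtain ⟨c, n, hc, hl⟩ := h
  exact ⟨c, n, fun q => (h1 q).trans (hc q), hl.trans h2.symm⟩

lemma PS.const (k : ℝ≥0∞) : PS (fun _ => k) 0 := by
  refine PS.ofRep (A := Unit) (fun _ => k) (fun _ => 0) (fun q => ?_) ?_
  · rw [tsum_unit]; simp
  · simp

lemma PS.linear (k : ℝ≥0∞) : PS (fun q => k * q) k := by
  refine PS.ofRep (A := Unit) (fun _ => k) (fun _ => 1) (fun q => ?_) ?_
  · rw [tsum_unit]; simp
  · rw [tsum_unit]; simp

lemma PS.tsum {ι : Type*} [Countable ι] {g : ι → ℝ≥0∞ → ℝ≥0∞} {L : ι → ℝ≥0∞}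
    (h : ∀ i, PS (g i) (L i)) : PS (fun q => ∑' i, g i q) (∑' i, L i) := by
  choose c n hrep hlin using h
  refine PS.ofRep (A := ι × ℕ) (fun p => c p.1 p.2) (fun p => n p.1 p.2) (fun q => ?_) ?_
  · calc (∑' i, g i q) = ∑' i, ∑' j, c i j * q ^ n i j := tsum_congr fun i => hrep i q
      _ = ∑' p : ι × ℕ, c p.1 p.2 * q ^ n p.1 p.2 :=
          (ENNReal.tsum_prod' (f := fun p => c p.1 p.2 * q ^ n p.1 p.2)).symm
  · calc (∑' p : ι × ℕ, if n p.1 p.2 = 1 then c p.1 p.2 else 0)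
        = ∑' i, ∑' j, (if n i j = 1 then c i j else 0) :=
          ENNReal.tsum_prod' (f := fun p => if n p.1 p.2 = 1 then c p.1 p.2 else 0)
      _ = ∑' i, L i := tsum_congr fun i => hlin i

lemma tsum_mul_tsum_prod {α β : Type*} (A : α → ℝ≥0∞) (B : β → ℝ≥0∞) :
    ∑' p : α × β, A p.1 * B p.2 = (∑' i, A i) * ∑' j, B j := by
  calc (∑' p : α × β, A p.1 * B p.2) = ∑' i, ∑' j, A i * B j :=
        ENNReal.tsum_prod' (f := fun p => A p.1 * B p.2)
    _ = ∑' i, A i * ∑' j, B j := tsum_congr fun i => ENNReal.tsum_mul_left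
    _ = (∑' i, A i) * ∑' j, B j := ENNReal.tsum_mul_right

lemma PS.mul {g h : ℝ≥0∞ → ℝ≥0∞} {Lg Lh : ℝ≥0∞} (hg : PS g Lg) (hh : PS h Lh) :
    PS (fun q => g q * h q) (Lg * h 0 + g 0 * Lh) := by
  obtain ⟨c, n, hc, hcl⟩ := hg
  obtain ⟨d, m, hd, hdl⟩ := hh
  have hg0 : g 0 = ∑' i, (if n i = 0 then c i else 0) := by
    rw [hc 0]
    exact tsum_congr fun i => by rcases hni : n i with _ | k <;> simp [hni]
  have hh0 : h 0 = ∑' j, (if m j = 0 then d j else 0) := by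
    rw [hd 0]
    exact tsum_congr fun j => by rcases hmj : m j with _ | k <;> simp [hmj]
  refine PS.ofRep (A := ℕ × ℕ) (fun p => c p.1 * d p.2) (fun p => n p.1 + m p.2)
    (fun q => ?_) ?_
  · calc g q * h q = (∑' i, c i * q ^ n i) * ∑' j, d j * q ^ m j := by rw [hc, hd]
      _ = ∑' p : ℕ × ℕ, (c p.1 * q ^ n p.1) * (d p.2 * q ^ m p.2) :=
          (tsum_mul_tsum_prod _ _).symm
      _ = ∑' p : ℕ × ℕ, c p.1 * d p.2 * q ^ (n p.1 + m p.2) := by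
          refine tsum_congr fun p => ?_
          rw [pow_add]; ring
  · have key : ∀ (p q : ℕ) (a b : ℝ≥0∞),
        (if p + q = 1 then a * b else 0)
          = (if p = 1 then a else 0) * (if q = 0 then b else 0)
            + (if p = 0 then a else 0) * (if q = 1 then b else 0) := by
      intro p q a b
      rcases p with _ | _ | p <;> rcases q with _ | _ | q <;> simp <;> intro h <;> omega
    calc (∑' pr : ℕ × ℕ, if n pr.1 + m pr.2 = 1 then c pr.1 * d pr.2 else 0)
        = ∑' pr : ℕ × ℕ,
            ((if n pr.1 = 1 then c pr.1 else 0) * (if m pr.2 = 0 then d pr.2 else 0)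
              + (if n pr.1 = 0 then c pr.1 else 0) * (if m pr.2 = 1 then d pr.2 else 0)) :=
          tsum_congr fun pr => key _ _ _ _
      _ = (∑' pr : ℕ × ℕ, (if n pr.1 = 1 then c pr.1 else 0) * (if m pr.2 = 0 then d pr.2 else 0))
            + ∑' pr : ℕ × ℕ, (if n pr.1 = 0 then c pr.1 else 0) * (if m pr.2 = 1 then d pr.2 else 0) :=
          ENNReal.tsum_add
      _ = (∑' i, if n i = 1 then c i else 0) * (∑' j, if m j = 0 then d j else 0)
            + (∑' i, if n i = 0 then c i else 0) * (∑' j, if m j = 1 then d j else 0) := by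
          exact congrArg₂ (· + ·)
            (tsum_mul_tsum_prod (fun i => if n i = 1 then c i else 0)
              (fun j => if m j = 0 then d j else 0))
            (tsum_mul_tsum_prod (fun i => if n i = 0 then c i else 0)
              (fun j => if m j = 1 then d j else 0))
      _ = Lg * h 0 + g 0 * Lh := by rw [hcl, hdl, hg0, hh0]

lemma PS.const_mul {g : ℝ≥0∞ → ℝ≥0∞} {L : ℝ≥0∞} (k : ℝ≥0∞) (hg : PS g L) :
    PS (fun q => k * g q) (k * L) := by
  have := (PS.const k).mul hg
  simpa using this

lemma PS.add {g h : ℝ≥0∞ → ℝ≥0∞} {Lg Lh : ℝ≥0∞} (hg : PS g Lg) (hh : PS h Lh) :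
    PS (fun q => g q + h q) (Lg + Lh) := by
  have := PS.tsum (ι := Bool) (g := fun b => if b = true then g else h)
    (L := fun b => if b = true then Lg else Lh) (by intro b; cases b <;> simpa)
  refine this.congr (fun q => ?_) ?_
  · rw [show (∑' b : Bool, (if b = true then g else h) q) = _ from tsum_bool _]
    simp [add_comm]
  · rw [tsum_bool]
    simp [add_comm]

lemma PS.affine (k₀ k₁ : ℝ≥0∞) : PS (fun q => k₀ + q * k₁) k₁ := by
  have := (PS.const k₀).add (PS.linear k₁)
  exact this.congr (fun q => by rw [mul_comm]) (by rw [zero_add])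


lemma mpow_cons {β : Type*} (y : β → ℝ≥0∞) (b : β) (ν : Multiset β) :
    mpow y (b ::ₘ ν) = y b * mpow y ν := by
  simp [mpow]

lemma PS.mprod {β : Type*} [DecidableEq β] (g : β → ℝ≥0∞ → ℝ≥0∞) (v y : β → ℝ≥0∞)
    (hg : ∀ b, PS (g b) (v b)) (hy : ∀ b, g b 0 = y b) (ν : Multiset β) :
    PS (fun q => (ν.map (fun b => g b q)).prod)
      (∑' b : β, (ν.count b : ℝ≥0∞) * v b * mpow y (ν.erase b)) := by
  induction ν using Multiset.induction_on with
  | empty =>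
      refine (PS.const 1).congr (fun q => by simp) ?_
      simp
  | cons b₀ ν ih =>
      have hmul := (hg b₀).mul ih
      refine hmul.congr (fun q => by simp) ?_
      have h0 : (ν.map fun b => g b 0).prod = mpow y ν := by
        unfold mpow
        congr 1
        exact Multiset.map_congr rfl (fun b _ => hy b)
      rw [h0, hy b₀]
      have key : ∀ b : β, (((b₀ ::ₘ ν).count b : ℝ≥0∞)) * v b * mpow y ((b₀ ::ₘ ν).erase b)
          = (if b = b₀ then v b₀ * mpow y ν else 0)
            + y b₀ * ((ν.count b : ℝ≥0∞) * v b * mpow y (ν.erase b)) := by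
        intro b
        by_cases hb : b = b₀
        · subst hb
          rw [Multiset.count_cons_self, Multiset.erase_cons_head, if_pos rfl]
          by_cases hmem : b ∈ ν
          · have hmp : mpow y ν = y b * mpow y (ν.erase b) := by
              conv_lhs => rw [← Multiset.cons_erase hmem]
              rw [mpow_cons]
            rw [hmp]
            push_cast
            ring
          · have hcount : ν.count b = 0 := Multiset.count_eq_zero.2 hmem
            rw [hcount]
            push_cast
            ring
        · rw [Multiset.count_cons_of_ne hb, Multiset.erase_cons_tail _ (Ne.symm hb),
            mpow_cons, if_neg hb]
          ring
      calc (∑' b, ((b₀ ::ₘ ν).count b : ℝ≥0∞) * v b * mpow y ((b₀ ::ₘ ν).erase b))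
          = ∑' b, ((if b = b₀ then v b₀ * mpow y ν else 0)
              + y b₀ * ((ν.count b : ℝ≥0∞) * v b * mpow y (ν.erase b))) := tsum_congr key
        _ = (∑' b, if b = b₀ then v b₀ * mpow y ν else 0)
              + ∑' b, y b₀ * ((ν.count b : ℝ≥0∞) * v b * mpow y (ν.erase b)) :=
            ENNReal.tsum_add
        _ = v b₀ * mpow y ν
              + y b₀ * ∑' b, (ν.count b : ℝ≥0∞) * v b * mpow y (ν.erase b) := by
            rw [tsum_ite_eq, ENNReal.tsum_mul_left]

lemma reindex {β : Type*} [DecidableEq β] (r : Multiset β → ℝ≥0∞) (y v : β → ℝ≥0∞) :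
    ∑' ν : Multiset β, r ν * (∑' b : β, (ν.count b : ℝ≥0∞) * v b * mpow y (ν.erase b))
      = ∑' b : β, (∑' ν : Multiset β, ((ν.count b : ℝ≥0∞) + 1) * r (ν + {b}) * mpow y ν) * v b := by
  have hadd : ∀ (ν : Multiset β) (b : β), ν + ({b} : Multiset β) = b ::ₘ ν := by
    intro ν b
    rw [add_comm, Multiset.singleton_add]
  calc (∑' ν : Multiset β, r ν * (∑' b : β, (ν.count b : ℝ≥0∞) * v b * mpow y (ν.erase b)))
      = ∑' ν : Multiset β, ∑' b : β, r ν * ((ν.count b : ℝ≥0∞) * v b * mpow y (ν.erase b)) :=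
        tsum_congr fun ν => ENNReal.tsum_mul_left.symm
    _ = ∑' b : β, ∑' ν : Multiset β, r ν * ((ν.count b : ℝ≥0∞) * v b * mpow y (ν.erase b)) :=
        ENNReal.tsum_comm
    _ = ∑' b : β, (∑' ν : Multiset β, ((ν.count b : ℝ≥0∞) + 1) * r (ν + {b}) * mpow y ν) * v b := by
        refine tsum_congr fun b => ?_
        rw [← ENNReal.tsum_mul_right]
        have hinj : Function.Injective (fun ν : Multiset β => ν + ({b} : Multiset β)) :=
          fun ν₁ ν₂ h => by simpa using h
        have hkey := Function.Injective.tsum_eq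
          (f := fun μ : Multiset β => r μ * ((μ.count b : ℝ≥0∞) * v b * mpow y (μ.erase b)))
          hinj ?_
        · rw [← hkey]
          refine tsum_congr fun ν => ?_
          have h1 : ((ν + ({b} : Multiset β)).count b : ℝ≥0∞) = (ν.count b : ℝ≥0∞) + 1 := by
            rw [hadd, Multiset.count_cons_self]
            push_cast
            ring
          have h2 : (ν + ({b} : Multiset β)).erase b = ν := by
            rw [hadd, Multiset.erase_cons_head]
          show r (ν + {b}) * (((ν + ({b} : Multiset β)).count b : ℝ≥0∞) * v b
              * mpow y ((ν + ({b} : Multiset β)).erase b))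
            = ((ν.count b : ℝ≥0∞) + 1) * r (ν + {b}) * mpow y ν * v b
          rw [h1, h2]
          ring
        · intro μ hμ
          by_contra hr
          apply hμ
          have hbμ : b ∉ μ := by
            intro hbμ
            exact hr ⟨μ.erase b, by simpa [hadd] using Multiset.cons_erase hbμ⟩
          have : μ.count b = 0 := Multiset.count_eq_zero.2 hbμ
          simp [Function.mem_support, this]

lemma PS.hasDerivWithinAt {G : ℝ≥0∞ → ℝ≥0∞} {L : ℝ≥0∞} (h : PS G L) (hfin : G 1 ≠ ⊤) :
    HasDerivWithinAt (fun θ : ℝ => (G (ENNReal.ofReal θ)).toReal) L.toReal (Set.Ici 0) 0 := by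
  obtain ⟨c, n, hrep, hlin⟩ := h
  set C := ∑' i, c i with hC
  have hCfin : C ≠ ⊤ := by
    have h1 : G 1 = C := by rw [hrep 1]; simp [hC]
    rwa [h1] at hfin
  set c0 := ∑' i, (if n i = 0 then c i else 0) with hc0def
  set Rf : ℝ≥0∞ → ℝ≥0∞ := fun q => ∑' i, (if 2 ≤ n i then c i * q ^ n i else 0) with hRf
  have hdec : ∀ q : ℝ≥0∞, G q = c0 + L * q + Rf q := by
    intro q
    rw [hrep q]
    have hpt : ∀ i, c i * q ^ n i
        = (if n i = 0 then c i else 0) + (if n i = 1 then c i else 0) * q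
          + (if 2 ≤ n i then c i * q ^ n i else 0) := by
      intro i
      rcases hni : n i with _ | _ | k
      · simp
      · simp
      · have h2 : 2 ≤ k + 2 := by omega
        simp [h2]
    rw [tsum_congr hpt, ENNReal.tsum_add, ENNReal.tsum_add, ENNReal.tsum_mul_right, hlin]
  have hR0 : Rf 0 = 0 := by
    refine ENNReal.tsum_eq_zero.2 fun i => ?_
    split_ifs with h2
    · rw [zero_pow (by omega), mul_zero]
    · rfl
  have hc0 : G 0 = c0 := by
    rw [hdec 0, hR0, mul_zero, add_zero, add_zero]
  have hc0fin : c0 ≠ ⊤ :=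
    ne_top_of_le_ne_top hCfin
      (Summable.tsum_le_tsum (fun i => by split_ifs <;> simp) ENNReal.summable ENNReal.summable)
  have hLfin : L ≠ ⊤ := by
    rw [← hlin]
    exact ne_top_of_le_ne_top hCfin
      (Summable.tsum_le_tsum (fun i => by split_ifs <;> simp) ENNReal.summable ENNReal.summable)
  have hRle : ∀ q : ℝ≥0∞, q ≤ 1 → Rf q ≤ q ^ 2 * C := by
    intro q hq
    calc Rf q ≤ ∑' i, q ^ 2 * c i := by
          refine Summable.tsum_le_tsum (fun i => ?_) ENNReal.summable ENNReal.summable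
          split_ifs with h2
          · calc c i * q ^ n i ≤ c i * q ^ 2 :=
                  mul_le_mul_right (pow_le_pow_right_of_le_one' hq h2) _
              _ = q ^ 2 * c i := mul_comm _ _
          · exact zero_le
      _ = q ^ 2 * C := ENNReal.tsum_mul_left
  rw [hasDerivWithinAt_iff_isLittleO, Asymptotics.isLittleO_iff]
  intro ε hε
  set C' := C.toReal with hC'
  have hC'0 : (0:ℝ) ≤ C' := ENNReal.toReal_nonneg
  have hδpos : (0:ℝ) < min 1 (ε / (C' + 1)) := by
    refine lt_min one_pos (div_pos hε (by linarith))
  filter_upwards [Ico_mem_nhdsGE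
    hδpos] with θ hθ
  obtain ⟨hθ0, hθlt⟩ := hθ
  have hθ1 : θ ≤ 1 := le_of_lt (lt_of_lt_of_le hθlt (min_le_left _ _))
  have hθδ : θ ≤ ε / (C' + 1) := le_of_lt (lt_of_lt_of_le hθlt (min_le_right _ _))
  set q := ENNReal.ofReal θ with hq
  have hq1 : q ≤ 1 := by
    rw [hq, ← ENNReal.ofReal_one]
    exact ENNReal.ofReal_le_ofReal hθ1
  have hqfin : q ≠ ⊤ := ENNReal.ofReal_ne_top
  have hq2Cfin : q ^ 2 * C ≠ ⊤ := ENNReal.mul_ne_top (ENNReal.pow_ne_top hqfin) hCfin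
  have hRfin : Rf q ≠ ⊤ := ne_top_of_le_ne_top hq2Cfin (hRle q hq1)
  have hfθ : (G q).toReal = c0.toReal + L.toReal * θ + (Rf q).toReal := by
    rw [hdec q, ENNReal.toReal_add (by
        exact ENNReal.add_ne_top.2 ⟨hc0fin, ENNReal.mul_ne_top hLfin hqfin⟩) hRfin,
      ENNReal.toReal_add hc0fin (ENNReal.mul_ne_top hLfin hqfin),
      ENNReal.toReal_mul, hq, ENNReal.toReal_ofReal hθ0]
  have hf0 : (G (ENNReal.ofReal 0)).toReal = c0.toReal := by
    rw [ENNReal.ofReal_zero, hc0]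
  have hmain : (G q).toReal - (G (ENNReal.ofReal 0)).toReal
      - (θ - 0) * L.toReal = (Rf q).toReal := by
    rw [hf0, hfθ]
    ring
  have hbound1 : (Rf q).toReal ≤ θ ^ 2 * C' := by
    have := ENNReal.toReal_mono hq2Cfin (hRle q hq1)
    rwa [ENNReal.toReal_mul, ENNReal.toReal_pow, hq, ENNReal.toReal_ofReal hθ0] at this
  have hbound2 : θ ^ 2 * C' ≤ ε * θ := by
    have h1 : θ * (C' + 1) ≤ ε := by
      rw [← le_div_iff₀ (by linarith : (0:ℝ) < C' + 1)]
      exact hθδ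
    nlinarith
  show ‖(G q).toReal - (G (ENNReal.ofReal 0)).toReal - (θ - 0) • L.toReal‖ ≤ ε * ‖θ - 0‖
  rw [smul_eq_mul]
  calc ‖(G q).toReal - (G (ENNReal.ofReal 0)).toReal - (θ - 0) * L.toReal‖
      = (Rf q).toReal := by rw [hmain]; exact Real.norm_of_nonneg ENNReal.toReal_nonneg
    _ ≤ ε * θ := le_trans hbound1 hbound2
    _ = ε * ‖θ - 0‖ := by rw [sub_zero, Real.norm_of_nonneg hθ0]

end Stmt13Aux

theorem stmt13_main {I J K : Type*} [Countable I] [Countable J] [Countable K]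
    [DecidableEq I] [DecidableEq J]
    (R : Set (K → ℝ≥0∞))
    (hRb : ∀ c, ∃ m : ℝ≥0, ∀ z ∈ R, z c ≤ (m : ℝ≥0∞))
    (s : Multiset I → J → ℝ≥0∞)
    (t : Multiset J → K → ℝ≥0∞)
    (x : I → ℝ≥0∞) (u : I → ℝ≥0∞)
    (hmem : funApp t (funApp s (x + u)) ∈ R) (c : K) :
    HasDerivWithinAt
      (fun θ : ℝ =>
        (funApp t (funApp s (fun a => x a + ENNReal.ofReal θ * u a)) c).toReal)
      ((∑' b : J, matDeriv t (funApp s x) b c * ∑' a : I, matDeriv s x a b * u a).toReal)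
      (Set.Ici (0:ℝ)) 0 := by
  classical
  open Stmt13Aux in
  set y : J → ℝ≥0∞ := funApp s x with hy
  set V : J → ℝ≥0∞ := fun b => ∑' a : I, matDeriv s x a b * u a with hV
  have haff : ∀ a : I, PS (fun q => x a + q * u a) (u a) := fun a => PS.affine _ _
  -- the component functions of the inner layer
  have hS : ∀ b : J, PS (fun q => funApp s (fun a => x a + q * u a) b) (V b) := by
    intro b
    have h1 : ∀ μ : Multiset I,
        PS (fun q => s μ b * (μ.map (fun a => x a + q * u a)).prod)
          (s μ b * ∑' a : I, (μ.count a : ℝ≥0∞) * u a * mpow x (μ.erase a)) := by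
      intro μ
      exact (PS.mprod (fun a q => x a + q * u a) u x haff (fun a => by simp) μ).const_mul _
    have h2 := PS.tsum h1
    refine h2.congr (fun q => rfl) ?_
    rw [hV]
    exact (Stmt13Aux.reindex (fun μ => s μ b) x u).symm
  have hS0 : ∀ b : J, (fun q => funApp s (fun a => x a + q * u a) b) 0 = y b := by
    intro b
    have hxx : (fun a => x a + (0:ℝ≥0∞) * u a) = x := funext fun a => by simp
    show funApp s (fun a => x a + (0:ℝ≥0∞) * u a) b = y b
    rw [hxx, hy]
  have hG : PS (fun q => funApp t (funApp s (fun a => x a + q * u a)) c)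
      (∑' b : J, matDeriv t y b c * V b) := by
    have h1 : ∀ ν : Multiset J,
        PS (fun q => t ν c * (ν.map (fun b => funApp s (fun a => x a + q * u a) b)).prod)
          (t ν c * ∑' b : J, (ν.count b : ℝ≥0∞) * V b * mpow y (ν.erase b)) := by
      intro ν
      exact (PS.mprod (fun b q => funApp s (fun a => x a + q * u a) b) V y hS hS0 ν).const_mul _
    have h2 := PS.tsum h1
    refine h2.congr (fun q => rfl) ?_
    exact (Stmt13Aux.reindex (fun ν => t ν c) y V).symm
  have hfin : (fun q => funApp t (funApp s (fun a => x a + q * u a)) c) 1 ≠ ⊤ := by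
    obtain ⟨m, hm⟩ := hRb c
    have h1 : (fun a => x a + (1:ℝ≥0∞) * u a) = x + u := funext fun a => by simp
    show funApp t (funApp s (fun a => x a + (1:ℝ≥0∞) * u a)) c ≠ ⊤
    rw [h1]
    exact ne_top_of_le_ne_top ENNReal.coe_ne_top (hm _ hmem)
  exact hG.hasDerivWithinAt hfin

/-- Chain rule: for morphisms s : !X ⊸ Y, t : !Y ⊸ Z, x ∈ P and u with x + u ∈ P,
the map θ ↦ Fun t(Fun s(x+θu))_c has right derivative at θ = 0 equal to
Σ_b Dt(Fun s(x))_{b,c} (Σ_a Ds(x)_{a,b} u_a). -/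
theorem stmt13 {I J K : Type*} [Countable I] [Countable J] [Countable K]
    [DecidableEq I] [DecidableEq J]
    (P : Set (I → ℝ≥0∞)) (Q : Set (J → ℝ≥0∞)) (R : Set (K → ℝ≥0∞))
    (hP : IsPCS P) (hQ : IsPCS Q) (hR : IsPCS R)
    (s : Multiset I → J → ℝ≥0∞) (hsfin : ∀ μ b, s μ b ≠ ⊤)
    (hs : ∀ x ∈ P, funApp s x ∈ Q)
    (t : Multiset J → K → ℝ≥0∞) (htfin : ∀ ν c, t ν c ≠ ⊤)
    (ht : ∀ y ∈ Q, funApp t y ∈ R)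
    (x : I → ℝ≥0∞) (u : I → ℝ≥0∞) (hx : x ∈ P) (hxu : x + u ∈ P) (c : K) :
    HasDerivWithinAt
      (fun θ : ℝ =>
        (funApp t (funApp s (fun a => x a + ENNReal.ofReal θ * u a)) c).toReal)
      ((∑' b : J, matDeriv t (funApp s x) b c * ∑' a : I, matDeriv s x a b * u a).toReal)
      (Set.Ici (0:ℝ)) 0 := by
  exact stmt13_main R (fun c => hR.bounded c) s t x u (ht _ (hs _ hxu)) c
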